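/- Let G be a group, ℋ a set of subgroups of G, and F = F⟨ℋ⟩ the family generated by ℋ. If G is amenable relative to ℋ, then for every normed ℝG-module W, every n ≥ 1, and every bounded G-equivariant function f : (G/F)^{n+1} → W^# with δⁿf = 0, there exists a bounded G-equivariant function b : (G/F)^n → W^# with δ^{n−1}b = f. That is, H^n_{F⟨ℋ⟩,b}(G;W^#) = 0 for every dual normed ℝG-module W^# and all n ≥ 1. -/

import Mathlib

open scoped BigOperators

universe u v w

namespace RelBdd

variable {G : Type u} [Group G]

/-- `F` is a family of subgroups of `G`: nonempty, closed under conjugation and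
closed under taking subgroups. -/
def IsFamily (F : Set (Subgroup G)) : Prop :=
  F.Nonempty ∧
    (∀ H ∈ F, ∀ g : G, Subgroup.map ((MulAut.conj g).toMonoidHom) H ∈ F) ∧
    ∀ H ∈ F, ∀ K : Subgroup G, K ≤ H → K ∈ F

/-- The `G`-set `G/F = ⨿_{H ∈ F} G/H`. -/
abbrev Cos (G : Type u) [Group G] (F : Set (Subgroup G)) : Type u :=
  Σ H : F, G ⧸ (H : Subgroup G)

instance (F : Set (Subgroup G)) : SMul G (Cos G F) :=
  ⟨fun g x => ⟨x.1, g • x.2⟩⟩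

instance (F : Set (Subgroup G)) : MulAction G (Cos G F) where
  one_smul := by
    rintro ⟨H, q⟩
    show (⟨H, (1 : G) • q⟩ : Cos G F) = ⟨H, q⟩
    rw [one_smul]
  mul_smul g h := by
    rintro ⟨H, q⟩
    show (⟨H, (g * h) • q⟩ : Cos G F) = ⟨H, g • h • q⟩
    rw [mul_smul]

/-- A function into a normed space is bounded. -/
def Bdd {α : Type*} {V : Type*} [Norm V] (f : α → V) : Prop :=
  ∃ C : ℝ, ∀ x, ‖f x‖ ≤ C

/-- The simplicial coboundary operator on `V`-valued cochains on a set `S`. -/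
def delta {S : Type*} {V : Type*} [AddCommGroup V] [Module ℝ V] (n : ℕ)
    (f : (Fin (n + 1) → S) → V) : (Fin (n + 2) → S) → V :=
  fun x => ∑ i : Fin (n + 2), ((-1 : ℝ) ^ (i : ℕ)) • f (fun j => x (i.succAbove j))

/-- `ℓ∞(S)`: the space of bounded real valued functions on `S`. -/
def Linf (S : Type v) : Submodule ℝ (S → ℝ) where
  carrier := {f | ∃ C : ℝ, ∀ s, |f s| ≤ C}
  add_mem' := by
    rintro f g ⟨C, hC⟩ ⟨D, hD⟩
    exact ⟨C + D, fun s => (abs_add_le _ _).trans (add_le_add (hC s) (hD s))⟩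
  zero_mem' := ⟨0, fun s => by simp⟩
  smul_mem' := by
    rintro r f ⟨C, hC⟩
    refine ⟨|r| * C, fun s => ?_⟩
    show |r * f s| ≤ |r| * C
    rw [abs_mul]
    exact mul_le_mul_of_nonneg_left (hC s) (abs_nonneg r)

/-- The constant function `r` as an element of `ℓ∞(S)`. -/
def constLinf (S : Type v) (r : ℝ) : Linf S :=
  ⟨fun _ => r, ⟨|r|, fun _ => le_rfl⟩⟩

/-- Precomposition with a map `φ : S → S` as a linear endomorphism of `ℓ∞(S)`. -/
def compL {S : Type v} (φ : S → S) : Linf S →ₗ[ℝ] Linf S where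
  toFun f := ⟨fun s => (f : S → ℝ) (φ s), by
    obtain ⟨C, hC⟩ := f.2
    exact ⟨C, fun s => hC (φ s)⟩⟩
  map_add' f g := by ext s; rfl
  map_smul' r f := by ext s; rfl

/-- There exists a `K`-invariant mean on the `K`-set `S`. -/
def InvariantMean (K : Type u) (S : Type v) [Group K] [MulAction K S] : Prop :=
  ∃ m : Linf S →ₗ[ℝ] ℝ,
    m (constLinf S 1) = 1 ∧
    (∀ f : Linf S, (∀ s, 0 ≤ (f : S → ℝ) s) → 0 ≤ m f) ∧
    ∀ (g : K) (f : Linf S), m (compL (fun s => g⁻¹ • s) f) = m f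

/-- The restriction `F|_H = {L ∩ H : L ∈ F}` of a collection of subgroups of `G` to
a collection of subgroups of `H`. -/
def restrictedFamily (F : Set (Subgroup G)) (H : Subgroup G) : Set (Subgroup H) :=
  {K | ∃ L ∈ F, K = L.subgroupOf H}

/-- `K` is amenable relative to the collection `𝒦` of its subgroups: the `K`-set
`⨿_{L ∈ 𝒦} K/L` admits a `K`-invariant mean. -/
def RelativelyAmenable (K : Type u) [Group K] (𝒦 : Set (Subgroup K)) : Prop :=
  InvariantMean K (Cos K 𝒦)

/-- The family generated by a set `ℋ` of subgroups: all subgroups of conjugates of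
members of `ℋ`, together with the trivial subgroup. -/
def famGen (ℋ : Set (Subgroup G)) : Set (Subgroup G) :=
  {K | K = ⊥ ∨ ∃ H ∈ ℋ, ∃ g : G, ∀ x ∈ K, g⁻¹ * x * g ∈ H}

/-- The left multiplication action of `g ∈ G` on a normed `ℝG`-module `W`, as a
continuous linear map. -/
def smulCLM {W : Type w} [NormedAddCommGroup W] [NormedSpace ℝ W] [DistribMulAction G W]
    [SMulCommClass G ℝ W] (hW : ∀ (g : G) (w : W), ‖g • w‖ = ‖w‖) (g : G) : W →L[ℝ] W :=
  LinearMap.mkContinuous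
    { toFun := fun w => g • w
      map_add' := fun a b => smul_add g a b
      map_smul' := fun r w => smul_comm g r w }
    1 (fun w => by simp [hW])

/-- The natural `G`-equivariant map `G/ℋ → G/F⟨ℋ⟩`. -/
def toGen (ℋ : Set (Subgroup G)) : Cos G ℋ → Cos G (famGen ℋ) :=
  fun x => ⟨⟨(x.1 : Subgroup G), Or.inr ⟨x.1, x.1.2, 1, fun y hy => by simpa using hy⟩⟩, x.2⟩

lemma toGen_smul (ℋ : Set (Subgroup G)) (g : G) (s : Cos G ℋ) :
    toGen ℋ (g • s) = g • toGen ℋ s := rfl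

lemma mean_const {S : Type v} (m : Linf S →ₗ[ℝ] ℝ) (h1 : m (constLinf S 1) = 1) (r : ℝ) :
    m (constLinf S r) = r := by
  have h : constLinf S r = r • constLinf S 1 := by
    apply Subtype.ext
    funext s
    simp [constLinf]
  rw [h, map_smul, h1, smul_eq_mul, mul_one]

lemma mean_abs_le {S : Type v} (m : Linf S →ₗ[ℝ] ℝ)
    (h1 : m (constLinf S 1) = 1)
    (hpos : ∀ f : Linf S, (∀ s, 0 ≤ (f : S → ℝ) s) → 0 ≤ m f)
    (h : Linf S) (C : ℝ) (hC : ∀ s, |(h : S → ℝ) s| ≤ C) : |m h| ≤ C := by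
  rw [abs_le]
  constructor
  · have := hpos (h - constLinf S (-C)) (fun s => by
      have := (abs_le.1 (hC s)).1
      simp only [AddSubgroupClass.coe_sub, Pi.sub_apply, constLinf]
      linarith)
    rw [map_sub, mean_const m h1] at this
    linarith
  · have := hpos (constLinf S C - h) (fun s => by
      have := (abs_le.1 (hC s)).2
      simp only [AddSubgroupClass.coe_sub, Pi.sub_apply, constLinf]
      linarith)
    rw [map_sub, mean_const m h1] at this
    linarith

/-- Theorem A, (i) ⇒ (ii).  If `G` is amenable relative to a set
`ℋ` of subgroups, then for every normed `ℝG`-module `W`, every `n ≥ 1` and every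
bounded `G`-equivariant cocycle `f : (G/F⟨ℋ⟩)^{n+1} → W^#` there is a bounded
`G`-equivariant `b : (G/F⟨ℋ⟩)^n → W^#` with `δb = f`; that is,
`H^n_{F⟨ℋ⟩,b}(G; W^#) = 0` for every dual normed `ℝG`-module and all `n ≥ 1`. -/
theorem relatively_amenable_implies_vanishing (G : Type u) [Group G]
    (ℋ : Set (Subgroup G))
    (hamen : InvariantMean G (Cos G ℋ))
    (W : Type v) [NormedAddCommGroup W] [NormedSpace ℝ W] [DistribMulAction G W]
    [SMulCommClass G ℝ W] (hW : ∀ (g : G) (w : W), ‖g • w‖ = ‖w‖)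
    (m : ℕ) (f : (Fin (m + 2) → Cos G (famGen ℋ)) → (W →L[ℝ] ℝ))
    (hfbdd : Bdd f)
    (hfequiv : ∀ (g : G) (x : Fin (m + 2) → Cos G (famGen ℋ)),
      f (fun j => g • x j) = (f x).comp (smulCLM hW g⁻¹))
    (hfcocycle : delta (m + 1) f = 0) :
    ∃ b : (Fin (m + 1) → Cos G (famGen ℋ)) → (W →L[ℝ] ℝ),
      Bdd b ∧
      (∀ (g : G) (x : Fin (m + 1) → Cos G (famGen ℋ)),
        b (fun j => g • x j) = (b x).comp (smulCLM hW g⁻¹)) ∧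
      delta m b = f := by
  classical
  obtain ⟨μ, hμ1, hμpos, hμinv⟩ := hamen
  obtain ⟨C, hC⟩ := hfbdd
  -- pointwise bound
  have hbound : ∀ (y : Fin (m + 2) → Cos G (famGen ℋ)) (w : W), |f y w| ≤ max C 0 * ‖w‖ := by
    intro y w
    calc |f y w| = ‖f y w‖ := (Real.norm_eq_abs _).symm
      _ ≤ ‖f y‖ * ‖w‖ := (f y).le_opNorm w
      _ ≤ max C 0 * ‖w‖ :=
        mul_le_mul_of_nonneg_right ((hC y).trans (le_max_left _ _)) (norm_nonneg w)
  -- the family of ℓ∞ functions to be averaged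
  set F : (Fin (m + 1) → Cos G (famGen ℋ)) → W → Linf (Cos G ℋ) := fun x w =>
    ⟨fun s => f (Fin.cons (toGen ℋ s) x) w, ⟨max C 0 * ‖w‖, fun s => hbound _ w⟩⟩ with hF
  -- linearity in w
  have hFadd : ∀ x (a b : W), F x (a + b) = F x a + F x b := by
    intro x a b
    apply Subtype.ext
    funext s
    exact map_add (f (Fin.cons (toGen ℋ s) x)) a b
  have hFsmul : ∀ x (r : ℝ) (a : W), F x (r • a) = r • F x a := by
    intro x r a
    apply Subtype.ext
    funext s
    exact map_smul (f (Fin.cons (toGen ℋ s) x)) r a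
  -- definition of b
  set b : (Fin (m + 1) → Cos G (famGen ℋ)) → (W →L[ℝ] ℝ) := fun x =>
    LinearMap.mkContinuous
      { toFun := fun w => μ (F x w)
        map_add' := fun a c => by
          show μ (F x (a + c)) = μ (F x a) + μ (F x c)
          rw [hFadd, map_add]
        map_smul' := fun r a => by
          show μ (F x (r • a)) = r • μ (F x a)
          rw [hFsmul, map_smul] }
      (max C 0)
      (fun w => by
        rw [Real.norm_eq_abs]
        exact mean_abs_le μ hμ1 hμpos (F x w) (max C 0 * ‖w‖) (fun s => hbound _ w)) with hb
  have hbapp : ∀ x w, b x w = μ (F x w) := fun x w => rfl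
  refine ⟨b, ⟨max C 0, fun x => LinearMap.mkContinuous_norm_le _ (le_max_right C 0) _⟩, ?_, ?_⟩
  · -- equivariance
    intro g x
    ext w
    have hpt : F (fun j => g • x j) w = compL (fun s => g⁻¹ • s) (F x (g⁻¹ • w)) := by
      apply Subtype.ext
      funext s
      show f (Fin.cons (toGen ℋ s) (fun j => g • x j)) w
        = f (Fin.cons (toGen ℋ (g⁻¹ • s)) x) (g⁻¹ • w)
      set y : Fin (m + 2) → Cos G (famGen ℋ) := Fin.cons (toGen ℋ (g⁻¹ • s)) x with hy
      have hcons : Fin.cons (toGen ℋ s) (fun j => g • x j) = fun j => g • y j := by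
        funext j
        refine Fin.cases ?_ (fun i => ?_) j
        · show toGen ℋ s = g • toGen ℋ (g⁻¹ • s)
          rw [← toGen_smul, smul_inv_smul]
        · show g • x i = g • y i.succ
          rw [hy, Fin.cons_succ]
      rw [hcons, hfequiv g]
      rfl
    show μ (F (fun j => g • x j) w) = (b x).comp (smulCLM hW g⁻¹) w
    rw [hpt, hμinv g]
    rfl
  · -- coboundary
    -- key pointwise cocycle identity
    have key : ∀ (a : Cos G (famGen ℋ)) (x : Fin (m + 2) → Cos G (famGen ℋ)) (w : W),
        f x w = ∑ i : Fin (m + 2),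
          ((-1 : ℝ) ^ (i : ℕ)) • f (Fin.cons a (fun j => x (i.succAbove j))) w := by
      intro a x w
      have h0 : delta (m + 1) f (Fin.cons a x) w = 0 := by
        rw [hfcocycle]; rfl
      unfold delta at h0
      rw [ContinuousLinearMap.sum_apply] at h0
      simp only [ContinuousLinearMap.smul_apply] at h0
      rw [Fin.sum_univ_succ] at h0
      have hfirst : (fun j : Fin (m + 2) =>
          (Fin.cons a x : Fin (m + 3) → Cos G (famGen ℋ)) ((0 : Fin (m + 3)).succAbove j)) = x := by
        funext j
        rw [Fin.zero_succAbove, Fin.cons_succ]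
      have hrest : ∀ k : Fin (m + 2),
          (fun j : Fin (m + 2) =>
            (Fin.cons a x : Fin (m + 3) → Cos G (famGen ℋ)) ((Fin.succ k).succAbove j))
            = Fin.cons a (fun j => x (k.succAbove j)) := by
        intro k
        funext j
        refine Fin.cases ?_ (fun i => ?_) j
        · rw [Fin.succ_succAbove_zero]
          rfl
        · rw [Fin.succ_succAbove_succ, Fin.cons_succ, Fin.cons_succ]
      rw [hfirst] at h0
      simp only [Fin.val_zero, pow_zero, one_smul] at h0
      have hsum : ∑ k : Fin (m + 2),
          ((-1 : ℝ) ^ ((Fin.succ k : Fin (m + 3)) : ℕ))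
            • f (fun j => (Fin.cons a x : Fin (m + 3) → Cos G (famGen ℋ))
              ((Fin.succ k).succAbove j)) w
          = - ∑ i : Fin (m + 2),
            ((-1 : ℝ) ^ (i : ℕ)) • f (Fin.cons a (fun j => x (i.succAbove j))) w := by
        rw [← Finset.sum_neg_distrib]
        refine Finset.sum_congr rfl (fun k _ => ?_)
        rw [hrest k, Fin.val_succ, pow_succ, smul_eq_mul, smul_eq_mul]
        ring
      rw [hsum] at h0
      linarith
    funext x
    ext w
    show delta m b x w = f x w
    unfold delta
    rw [ContinuousLinearMap.sum_apply]
    simp only [ContinuousLinearMap.smul_apply]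
    have : ∀ i : Fin (m + 2), b (fun j => x (i.succAbove j)) w
        = μ (F (fun j => x (i.succAbove j)) w) := fun i => rfl
    simp only [this]
    have hLinf : ∑ i : Fin (m + 2),
        ((-1 : ℝ) ^ (i : ℕ)) • F (fun j => x (i.succAbove j)) w
        = constLinf (Cos G ℋ) (f x w) := by
      apply Subtype.ext
      funext s
      have hcoe : ((∑ i : Fin (m + 2),
          ((-1 : ℝ) ^ (i : ℕ)) • F (fun j => x (i.succAbove j)) w : Linf (Cos G ℋ)) : Cos G ℋ → ℝ) s
          = ∑ i : Fin (m + 2),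
            ((-1 : ℝ) ^ (i : ℕ)) • f (Fin.cons (toGen ℋ s) (fun j => x (i.succAbove j))) w := by
        rw [AddSubmonoidClass.coe_finset_sum, Finset.sum_apply]
        rfl
      rw [hcoe]
      exact (key (toGen ℋ s) x w).symm
    calc ∑ i : Fin (m + 2), ((-1 : ℝ) ^ (i : ℕ)) • μ (F (fun j => x (i.succAbove j)) w)
        = μ (∑ i : Fin (m + 2), ((-1 : ℝ) ^ (i : ℕ)) • F (fun j => x (i.succAbove j)) w) := by
          rw [map_sum]
          exact Finset.sum_congr rfl (fun i _ => (map_smul μ _ _).symm)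
      _ = μ (constLinf (Cos G ℋ) (f x w)) := by rw [hLinf]
      _ = f x w := mean_const μ hμ1 _


end RelBdd
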